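/- Let 𝒲⁺ = (Aᵀ ⊗ I_M)(𝒲 − μg). Then ‖𝒲⁺ − P𝒲⁺‖² ≤ λ₂ ‖𝒲 − P𝒲‖² + μ² (λ₂²/(1 − λ₂)) ‖g‖². (This is the single-step network-disagreement inequality, equation (51) in the proof of Theorem 1, stating that one adapt-and-combine diffusion step contracts the deviation from the network centroid up to a gradient-dependent perturbation.) -/

import Mathlib

open MeasureTheory Finset Matrix

private lemma esq' {M : ℕ} (v : EuclideanSpace ℝ (Fin M)) : ‖v‖ ^ 2 = ∑ i, (v i) ^ 2 := by
  rw [EuclideanSpace.norm_eq, Real.sq_sqrt (by positivity)]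
  simp [sq_abs]

private lemma sum_apply_euc {K M : ℕ} (c : Fin K → ℝ) (y : Fin K → EuclideanSpace ℝ (Fin M))
    (m : Fin M) : (∑ l, c l • y l) m = ∑ l, c l * y l m := by
  induction (Finset.univ : Finset (Fin K)) using Finset.induction with
  | empty => simp
  | insert _ _ h ih => simp [Finset.sum_insert h, ih]

private lemma mulvec_bound {K : ℕ} (B : Matrix (Fin K) (Fin K) ℝ) (lam2 : ℝ)
    (hlam : lam2 = ‖Matrix.toEuclideanCLM (𝕜 := ℝ) B‖) (v : Fin K → ℝ) :
    ∑ k, (B.mulVec v k) ^ 2 ≤ lam2 ^ 2 * ∑ l, (v l) ^ 2 := by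
  have h := (Matrix.toEuclideanCLM (𝕜 := ℝ) B).le_opNorm ((WithLp.equiv 2 (Fin K → ℝ)).symm v)
  rw [WithLp.equiv_symm_apply, Matrix.toEuclideanCLM_toLp] at h
  have h2 : ‖(WithLp.equiv 2 (Fin K → ℝ)).symm (Matrix.toLin' B v)‖ ^ 2
      ≤ lam2 ^ 2 * ‖(WithLp.equiv 2 (Fin K → ℝ)).symm v‖ ^ 2 := by
    rw [hlam, ← mul_pow]
    exact pow_le_pow_left₀ (norm_nonneg _) h 2
  rw [esq', esq'] at h2
  simpa [Matrix.toLin'_apply] using h2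

private lemma block_bound {K M : ℕ} (B : Matrix (Fin K) (Fin K) ℝ) (lam2 : ℝ)
    (hlam : lam2 = ‖Matrix.toEuclideanCLM (𝕜 := ℝ) B‖)
    (y : Fin K → EuclideanSpace ℝ (Fin M)) :
    ∑ k, ‖∑ l, B k l • y l‖ ^ 2 ≤ lam2 ^ 2 * ∑ l, ‖y l‖ ^ 2 := by
  calc ∑ k, ‖∑ l, B k l • y l‖ ^ 2
      = ∑ k, ∑ m, (∑ l, B k l * y l m) ^ 2 := by
        simp_rw [esq', sum_apply_euc]
    _ = ∑ m, ∑ k, (B.mulVec (fun l => y l m) k) ^ 2 := by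
        rw [Finset.sum_comm]; simp [Matrix.mulVec, dotProduct]
    _ ≤ ∑ m, lam2 ^ 2 * ∑ l, (y l m) ^ 2 :=
        Finset.sum_le_sum fun m _ => mulvec_bound B lam2 hlam _
    _ = lam2 ^ 2 * ∑ l, ‖y l‖ ^ 2 := by
        rw [← Finset.mul_sum, Finset.sum_comm]; simp_rw [esq']

private lemma split_sq {E : Type*} [NormedAddCommGroup E] [NormedSpace ℝ E]
    (a b : E) (μ t : ℝ) (ht : 0 < t) (hμ : 0 ≤ μ) :
    ‖a - μ • b‖ ^ 2 ≤ (1 + t) * ‖a‖ ^ 2 + (1 + t⁻¹) * (μ ^ 2 * ‖b‖ ^ 2) := by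
  have h1 : ‖a - μ • b‖ ≤ ‖a‖ + μ * ‖b‖ := by
    refine (norm_sub_le _ _).trans ?_
    rw [norm_smul, Real.norm_eq_abs, abs_of_nonneg hμ]
  have h2 : ‖a - μ • b‖ ^ 2 ≤ (‖a‖ + μ * ‖b‖) ^ 2 :=
    pow_le_pow_left₀ (norm_nonneg _) h1 2
  have hk : t * ‖a‖ ^ 2 + t⁻¹ * (μ * ‖b‖) ^ 2 - 2 * ‖a‖ * (μ * ‖b‖)
      = (t * ‖a‖ - μ * ‖b‖) ^ 2 / t := by
    field_simp; ring
  have h3 : 2 * ‖a‖ * (μ * ‖b‖) ≤ t * ‖a‖ ^ 2 + t⁻¹ * (μ * ‖b‖) ^ 2 := by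
    have hd : 0 ≤ (t * ‖a‖ - μ * ‖b‖) ^ 2 / t := by positivity
    linarith [hk]
  nlinarith [h2, h3]

private lemma centered_le {K M : ℕ} (hK : 0 < K) (g : Fin K → EuclideanSpace ℝ (Fin M)) :
    ∑ k, ‖g k - (K : ℝ)⁻¹ • ∑ j, g j‖ ^ 2 ≤ ∑ k, ‖g k‖ ^ 2 := by
  have hKne : (K : ℝ) ≠ 0 := Nat.cast_ne_zero.mpr hK.ne'
  set c : EuclideanSpace ℝ (Fin M) := (K : ℝ)⁻¹ • ∑ j, g j with hc
  have hsum : ∑ j, g j = (K : ℝ) • c := by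
    rw [hc, smul_smul, mul_inv_cancel₀ hKne, one_smul]
  have hi : ∑ k, (inner ℝ (g k) c : ℝ) = (K : ℝ) * ‖c‖ ^ 2 := by
    rw [← sum_inner, hsum, real_inner_smul_left, real_inner_self_eq_norm_sq]
  have hexp : ∑ k, ‖g k - c‖ ^ 2
      = (∑ k, ‖g k‖ ^ 2) - 2 * ((K : ℝ) * ‖c‖ ^ 2) + (K : ℝ) * ‖c‖ ^ 2 := by
    calc ∑ k, ‖g k - c‖ ^ 2
        = ∑ k, (‖g k‖ ^ 2 - 2 * (inner ℝ (g k) c : ℝ) + ‖c‖ ^ 2) := by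
          simp_rw [norm_sub_sq_real]
      _ = (∑ k, ‖g k‖ ^ 2) - 2 * ∑ k, (inner ℝ (g k) c : ℝ) + (K : ℝ) * ‖c‖ ^ 2 := by
          rw [Finset.sum_add_distrib, Finset.sum_sub_distrib, ← Finset.mul_sum,
            Finset.sum_const, Finset.card_univ, Fintype.card_fin, nsmul_eq_mul]
      _ = _ := by rw [hi]
  have hcnn : 0 ≤ (K : ℝ) * ‖c‖ ^ 2 := by positivity
  linarith

/-- **Single-step network-disagreement inequality (equation (51) of Dif-MAML).**
One adapt-and-combine diffusion step `𝒲⁺ = (Aᵀ ⊗ I_M)(𝒲 − μg)` contracts the deviation from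
the network centroid up to a gradient-dependent perturbation. Block `k` of `𝒲⁺` is
`Σ_ℓ A_{ℓk}(𝒲_ℓ − μ g_ℓ)`, and the squared Euclidean norm on `ℝ^{KM}` is the sum of the
squared block norms. -/
theorem single_step_network_disagreement
    (K M : ℕ) (hK : 0 < K) (μ lam2 : ℝ) (hμ : 0 < μ)
    (A : Matrix (Fin K) (Fin K) ℝ)
    (hA_nonneg : ∀ k l, 0 ≤ A k l)
    (hA_row : ∀ k, ∑ l, A k l = 1)
    (hA_col : ∀ l, ∑ k, A k l = 1)
    (hlam : lam2 = ‖Matrix.toEuclideanCLM (𝕜 := ℝ)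
      ((Aᵀ - (K : ℝ)⁻¹ • Matrix.of (fun _ _ => (1 : ℝ))) : Matrix (Fin K) (Fin K) ℝ)‖)
    (hlam_pos : 0 < lam2) (hlam_lt : lam2 < 1)
    (W g : Fin K → EuclideanSpace ℝ (Fin M)) :
    (∑ k, ‖(∑ l, A l k • (W l - μ • g l))
        - (K : ℝ)⁻¹ • ∑ j, ∑ l, A l j • (W l - μ • g l)‖ ^ 2)
      ≤ lam2 * (∑ k, ‖W k - (K : ℝ)⁻¹ • ∑ j, W j‖ ^ 2)
        + μ ^ 2 * (lam2 ^ 2 / (1 - lam2)) * ∑ k, ‖g k‖ ^ 2 := by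
  have hKne : (K : ℝ) ≠ 0 := Nat.cast_ne_zero.mpr hK.ne'
  set B : Matrix (Fin K) (Fin K) ℝ :=
    Aᵀ - (K : ℝ)⁻¹ • Matrix.of (fun _ _ => (1 : ℝ)) with hB
  have hBent : ∀ k l, B k l = A l k - (K : ℝ)⁻¹ := by
    intro k l
    simp [hB, Matrix.sub_apply, Matrix.transpose_apply, Matrix.smul_apply]
  set x : Fin K → EuclideanSpace ℝ (Fin M) := fun l => W l - μ • g l with hx
  set cx : EuclideanSpace ℝ (Fin M) := (K : ℝ)⁻¹ • ∑ l, x l with hcx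
  set cW : EuclideanSpace ℝ (Fin M) := (K : ℝ)⁻¹ • ∑ j, W j with hcW
  set cg : EuclideanSpace ℝ (Fin M) := (K : ℝ)⁻¹ • ∑ j, g j with hcg
  -- the double sum collapses
  have hdouble : ∑ j, ∑ l, A l j • x l = ∑ l, x l := by
    rw [Finset.sum_comm]
    calc ∑ l, ∑ j, A l j • x l = ∑ l, (∑ j, A l j) • x l := by
          simp_rw [Finset.sum_smul]
      _ = ∑ l, x l := by simp [hA_row]
  -- rows of B sum to zero
  have hBrow : ∀ k, ∑ l, B k l = 0 := by
    intro k
    simp_rw [hBent]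
    rw [Finset.sum_sub_distrib, hA_col k, Finset.sum_const, Finset.card_univ,
      Fintype.card_fin, nsmul_eq_mul, mul_inv_cancel₀ hKne, sub_self]
  -- block identity
  have hblock : ∀ k, (∑ l, A l k • x l) - (K : ℝ)⁻¹ • ∑ j, ∑ l, A l j • x l
      = ∑ l, B k l • (x l - cx) := by
    intro k
    have h1 : ∑ l, B k l • (x l - cx) = ∑ l, B k l • x l - (∑ l, B k l) • cx := by
      simp_rw [smul_sub, Finset.sum_sub_distrib, Finset.sum_smul]
    rw [h1, hBrow k, zero_smul, sub_zero, hdouble]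
    simp_rw [hBent, sub_smul, Finset.sum_sub_distrib, ← Finset.smul_sum]
  -- centered decomposition
  have hdecomp : ∀ l, x l - cx = (W l - cW) - μ • (g l - cg) := by
    intro l
    have hxsum : ∑ l, x l = (∑ j, W j) - μ • ∑ j, g j := by
      simp_rw [hx, Finset.sum_sub_distrib, Finset.smul_sum]
    rw [hcx, hxsum, hx, hcW, hcg]
    module
  set t : ℝ := (1 - lam2) / lam2 with htdef
  have ht : 0 < t := div_pos (by linarith) hlam_pos
  have h1lam : (0:ℝ) < 1 - lam2 := by linarith
  -- main chain
  have step1 : (∑ k, ‖(∑ l, A l k • x l) - (K : ℝ)⁻¹ • ∑ j, ∑ l, A l j • x l‖ ^ 2)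
      = ∑ k, ‖∑ l, B k l • (x l - cx)‖ ^ 2 := by
    exact Finset.sum_congr rfl fun k _ => by rw [hblock k]
  have step2 : ∑ k, ‖∑ l, B k l • (x l - cx)‖ ^ 2 ≤ lam2 ^ 2 * ∑ l, ‖x l - cx‖ ^ 2 :=
    block_bound B lam2 hlam _
  have step3 : ∑ l, ‖x l - cx‖ ^ 2
      ≤ (1 + t) * (∑ l, ‖W l - cW‖ ^ 2) + (1 + t⁻¹) * (μ ^ 2 * ∑ l, ‖g l - cg‖ ^ 2) := by
    calc ∑ l, ‖x l - cx‖ ^ 2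
        ≤ ∑ l, ((1 + t) * ‖W l - cW‖ ^ 2 + (1 + t⁻¹) * (μ ^ 2 * ‖g l - cg‖ ^ 2)) := by
          refine Finset.sum_le_sum fun l _ => ?_
          rw [hdecomp l]
          exact split_sq _ _ μ t ht hμ.le
      _ = _ := by
          rw [Finset.sum_add_distrib]
          simp_rw [← Finset.mul_sum]
  have hg : ∑ l, ‖g l - cg‖ ^ 2 ≤ ∑ l, ‖g l‖ ^ 2 := centered_le hK g
  have e1 : lam2 ^ 2 * (1 + t) = lam2 := by
    rw [htdef]; field_simp; ring
  have e2 : lam2 ^ 2 * (1 + t⁻¹) = lam2 ^ 2 / (1 - lam2) := by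
    rw [htdef, inv_div]; field_simp; ring
  have hcoef : 0 ≤ μ ^ 2 * (lam2 ^ 2 / (1 - lam2)) := by positivity
  calc (∑ k, ‖(∑ l, A l k • (W l - μ • g l))
        - (K : ℝ)⁻¹ • ∑ j, ∑ l, A l j • (W l - μ • g l)‖ ^ 2)
      = ∑ k, ‖∑ l, B k l • (x l - cx)‖ ^ 2 := step1
    _ ≤ lam2 ^ 2 * ∑ l, ‖x l - cx‖ ^ 2 := step2
    _ ≤ lam2 ^ 2 * ((1 + t) * (∑ l, ‖W l - cW‖ ^ 2)
          + (1 + t⁻¹) * (μ ^ 2 * ∑ l, ‖g l - cg‖ ^ 2)) :=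
        mul_le_mul_of_nonneg_left step3 (by positivity)
    _ = lam2 * (∑ l, ‖W l - cW‖ ^ 2)
          + μ ^ 2 * (lam2 ^ 2 / (1 - lam2)) * ∑ l, ‖g l - cg‖ ^ 2 := by
        rw [mul_add, ← mul_assoc, ← mul_assoc, e1, e2]; ring
    _ ≤ lam2 * (∑ k, ‖W k - (K : ℝ)⁻¹ • ∑ j, W j‖ ^ 2)
        + μ ^ 2 * (lam2 ^ 2 / (1 - lam2)) * ∑ k, ‖g k‖ ^ 2 := by
        have := mul_le_mul_of_nonneg_left hg hcoef
        rw [hcW]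
        linarith
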